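/- For every real u > 0 and integer m ≥ 2, the m-th derivative of f(u) = ∫₀^∞ x^{ε-1} ln(xu+1) e^{-x} dx (with fixed real ε ∈ (-1,-1/2)) satisfies f^{(m)}(u) · u^m = (-1)^{m+1} (m-1)! ∫₀^∞ x^{ε-1} e^{-x} (xu/(xu+1))^m dx. -/

import Mathlib

open MeasureTheory Real Set Metric

lemma st7_gamma {s : ℝ} (hs : 0 < s) :
    IntegrableOn (fun x : ℝ => x ^ (s - 1) * Real.exp (-x)) (Set.Ioi 0) := by
  simpa [mul_comm] using Real.GammaIntegral_convergent hs

lemma st7_rp {x : ℝ} (hx : 0 < x) (e : ℝ) (k : ℕ) : x ^ (e - 1) * x ^ k = x ^ (e + k - 1) := by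
  rw [← Real.rpow_natCast x k, ← Real.rpow_add hx]
  ring_nf

lemma st7_contOn (e : ℝ) (n : ℕ) (w : ℝ) (hw : 0 ≤ w) :
    ContinuousOn (fun x : ℝ => x ^ (e - 1) * Real.exp (-x) * (x / (x * w + 1)) ^ n) (Set.Ioi 0) := by
  apply ContinuousOn.mul
  · exact (continuousOn_id.rpow_const fun x hx => Or.inl (ne_of_gt hx)).mul
      (Real.continuous_exp.comp continuous_neg).continuousOn
  · apply ContinuousOn.pow
    apply continuousOn_id.div ((continuousOn_id.mul continuousOn_const).add continuousOn_const)
    intro x hx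
    have hx' : (0:ℝ) < x := hx
    have : (0:ℝ) < x * w + 1 := by nlinarith
    exact ne_of_gt this

lemma st7_frac_bounds {x w : ℝ} (hx : 0 < x) (hw : 0 < w) :
    0 ≤ x / (x * w + 1) ∧ x / (x * w + 1) ≤ x := by
  have h1 : (1:ℝ) ≤ x * w + 1 := by nlinarith
  have h0 : (0:ℝ) < x * w + 1 := by linarith
  exact ⟨div_nonneg hx.le h0.le, div_le_self hx.le h1⟩

lemma st7_int {e : ℝ} (he : -1 < e) {n : ℕ} (hn : 1 ≤ n) {w : ℝ} (hw : 0 < w) :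
    IntegrableOn (fun x : ℝ => x ^ (e - 1) * Real.exp (-x) * (x / (x * w + 1)) ^ n)
      (Set.Ioi 0) := by
  have hs : (0:ℝ) < e + n := by
    have : (1:ℝ) ≤ n := by exact_mod_cast hn
    linarith
  refine Integrable.mono' (st7_gamma hs) ((st7_contOn e n w hw.le).aestronglyMeasurable
    measurableSet_Ioi) ?_
  filter_upwards [self_mem_ae_restrict (measurableSet_Ioi : MeasurableSet (Set.Ioi (0:ℝ)))]
    with x hx
  have hx' : (0:ℝ) < x := hx
  obtain ⟨ht0, ht1⟩ := st7_frac_bounds hx' hw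
  have h1 : x ^ (e - 1) * Real.exp (-x) * (x / (x * w + 1)) ^ n
      ≤ x ^ (e - 1) * Real.exp (-x) * x ^ n := by
    have := pow_le_pow_left₀ ht0 ht1 n
    have hpos : (0:ℝ) < x ^ (e - 1) * Real.exp (-x) :=
      mul_pos (Real.rpow_pos_of_pos hx' _) (Real.exp_pos _)
    nlinarith
  have h2 : x ^ (e - 1) * Real.exp (-x) * x ^ n = x ^ (e + n - 1) * Real.exp (-x) := by
    rw [mul_right_comm, st7_rp hx']
  rw [Real.norm_eq_abs, abs_of_nonneg (by positivity)]
  calc x ^ (e - 1) * Real.exp (-x) * (x / (x * w + 1)) ^ n ≤ _ := h1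
    _ = _ := h2

lemma st7_int_log {e : ℝ} (he : -1 < e) {w : ℝ} (hw : 0 < w) :
    IntegrableOn (fun x : ℝ => x ^ (e - 1) * Real.log (x * w + 1) * Real.exp (-x))
      (Set.Ioi 0) := by
  have hs : (0:ℝ) < e + 1 := by linarith
  have hmeas : ContinuousOn
      (fun x : ℝ => x ^ (e - 1) * Real.log (x * w + 1) * Real.exp (-x)) (Set.Ioi 0) := by
    apply ContinuousOn.mul
    apply ContinuousOn.mul
    · exact continuousOn_id.rpow_const fun x hx => Or.inl (ne_of_gt hx)
    · apply ContinuousOn.log ((continuousOn_id.mul continuousOn_const).add continuousOn_const)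
      intro x hx
      have hx' : (0:ℝ) < x := hx
      have : (0:ℝ) < x * w + 1 := by nlinarith
      exact ne_of_gt this
    · exact (Real.continuous_exp.comp continuous_neg).continuousOn
  refine Integrable.mono' ((st7_gamma hs).const_mul w)
    (hmeas.aestronglyMeasurable measurableSet_Ioi) ?_
  filter_upwards [self_mem_ae_restrict (measurableSet_Ioi : MeasurableSet (Set.Ioi (0:ℝ)))]
    with x hx
  have hx' : (0:ℝ) < x := hx
  have h1 : (0:ℝ) < x * w + 1 := by nlinarith
  have hlog0 : 0 ≤ Real.log (x * w + 1) := Real.log_nonneg (by nlinarith)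
  have hlog1 : Real.log (x * w + 1) ≤ x * w := by
    have := Real.log_le_sub_one_of_pos h1
    linarith
  rw [Real.norm_eq_abs, abs_of_nonneg (by positivity)]
  have hrp : x ^ (e - 1) * x = x ^ (e + 1 - 1) := by
    simpa using st7_rp hx' e 1
  calc x ^ (e - 1) * Real.log (x * w + 1) * Real.exp (-x)
      ≤ x ^ (e - 1) * (x * w) * Real.exp (-x) := by
        have hpos : (0:ℝ) < x ^ (e - 1) := Real.rpow_pos_of_pos hx' _
        exact mul_le_mul_of_nonneg_right (mul_le_mul_of_nonneg_left hlog1 hpos.le)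
          (Real.exp_pos _).le
    _ = w * (x ^ (e + 1 - 1) * Real.exp (-x)) := by rw [← hrp]; ring

lemma st7_ball_pos {v w : ℝ} (hv : 0 < v) (hw : w ∈ Metric.ball v (v / 2)) : v / 2 < w := by
  have := hw
  rw [Metric.mem_ball, Real.dist_eq, abs_lt] at this
  linarith [this.1]

lemma st7_deriv_log {e : ℝ} (he : -1 < e) {v : ℝ} (hv : 0 < v) :
    HasDerivAt
      (fun w : ℝ => ∫ x in Set.Ioi (0:ℝ), x ^ (e - 1) * Real.log (x * w + 1) * Real.exp (-x))
      (∫ x in Set.Ioi (0:ℝ), x ^ (e - 1) * Real.exp (-x) * (x / (x * v + 1)) ^ 1) v := by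
  have hcont : ∀ w : ℝ, 0 ≤ w → ContinuousOn
      (fun x : ℝ => x ^ (e - 1) * Real.log (x * w + 1) * Real.exp (-x)) (Set.Ioi 0) := by
    intro w hw
    apply ContinuousOn.mul
    apply ContinuousOn.mul
    · exact continuousOn_id.rpow_const fun x hx => Or.inl (ne_of_gt hx)
    · apply ContinuousOn.log ((continuousOn_id.mul continuousOn_const).add continuousOn_const)
      intro x hx
      have hx' : (0:ℝ) < x := hx
      have := mul_nonneg hx'.le hw
      intro h; simp only [Pi.add_apply, Pi.mul_apply, id_eq] at h; nlinarith
    · exact (Real.continuous_exp.comp continuous_neg).continuousOn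
  have key := hasDerivAt_integral_of_dominated_loc_of_deriv_le (μ := volume.restrict (Set.Ioi 0))
    (F := fun w x => x ^ (e - 1) * Real.log (x * w + 1) * Real.exp (-x))
    (F' := fun w x => x ^ (e - 1) * Real.exp (-x) * (x / (x * w + 1)) ^ 1)
    (x₀ := v) (bound := fun x => x ^ (e + 1 - 1) * Real.exp (-x))
    (ball_mem_nhds v (half_pos hv))
    (by filter_upwards [eventually_gt_nhds hv] with w hw
        exact (hcont w hw.le).aestronglyMeasurable measurableSet_Ioi)
    (st7_int_log he hv)
    ((st7_contOn e 1 v hv.le).aestronglyMeasurable measurableSet_Ioi)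
    (by filter_upwards [self_mem_ae_restrict (measurableSet_Ioi : MeasurableSet (Set.Ioi (0:ℝ)))]
          with x hx w hw
        have hx' : (0:ℝ) < x := hx
        have hw' : 0 < w := lt_trans (half_pos hv) (st7_ball_pos hv hw)
        obtain ⟨ht0, ht1⟩ := st7_frac_bounds hx' hw'
        rw [Real.norm_eq_abs, abs_of_nonneg (by positivity), pow_one]
        calc x ^ (e - 1) * Real.exp (-x) * (x / (x * w + 1))
            ≤ x ^ (e - 1) * Real.exp (-x) * x :=
              mul_le_mul_of_nonneg_left ht1 (by positivity)
          _ = x ^ (e + 1 - 1) * Real.exp (-x) := by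
              rw [mul_right_comm]; simpa using st7_rp hx' e 1)
    (st7_gamma (by linarith : (0:ℝ) < e + 1))
    (by filter_upwards [self_mem_ae_restrict (measurableSet_Ioi : MeasurableSet (Set.Ioi (0:ℝ)))]
          with x hx w hw
        have hx' : (0:ℝ) < x := hx
        have hw' : 0 < w := lt_trans (half_pos hv) (st7_ball_pos hv hw)
        have hne : x * w + 1 ≠ 0 := by nlinarith [mul_pos hx' hw']
        have hlin : HasDerivAt (fun w : ℝ => x * w + 1) x w := by
          simpa using ((hasDerivAt_id w).const_mul x).add_const 1
        have h := ((hlin.log hne).const_mul (x ^ (e - 1))).mul_const (Real.exp (-x))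
        refine h.congr_deriv ?_
        rw [pow_one]; ring)
  exact key.2

lemma st7_pt_bound {e : ℝ} {x w : ℝ} (hx : 0 < x) (hw : 0 < w) (k : ℕ) :
    x ^ (e - 1) * Real.exp (-x) * (x / (x * w + 1)) ^ k ≤ x ^ (e + k - 1) * Real.exp (-x) := by
  obtain ⟨ht0, ht1⟩ := st7_frac_bounds hx hw
  calc x ^ (e - 1) * Real.exp (-x) * (x / (x * w + 1)) ^ k
      ≤ x ^ (e - 1) * Real.exp (-x) * x ^ k := by
        exact mul_le_mul_of_nonneg_left (pow_le_pow_left₀ ht0 ht1 k) (by positivity)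
    _ = x ^ (e + k - 1) * Real.exp (-x) := by rw [mul_right_comm, st7_rp hx]

lemma st7_deriv_pow {e : ℝ} (he : -1 < e) {n : ℕ} (hn : 1 ≤ n) {v : ℝ} (hv : 0 < v) :
    HasDerivAt
      (fun w : ℝ => ∫ x in Set.Ioi (0:ℝ), x ^ (e - 1) * Real.exp (-x) * (x / (x * w + 1)) ^ n)
      (-(n:ℝ) * ∫ x in Set.Ioi (0:ℝ),
          x ^ (e - 1) * Real.exp (-x) * (x / (x * v + 1)) ^ (n + 1)) v := by
  have hs : (0:ℝ) < e + (n + 1 : ℕ) := by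
    have : (1:ℝ) ≤ (n:ℝ) := by exact_mod_cast hn
    push_cast; linarith
  have key := hasDerivAt_integral_of_dominated_loc_of_deriv_le (μ := volume.restrict (Set.Ioi 0))
    (F := fun w x => x ^ (e - 1) * Real.exp (-x) * (x / (x * w + 1)) ^ n)
    (F' := fun w x => -(n:ℝ) * (x ^ (e - 1) * Real.exp (-x) * (x / (x * w + 1)) ^ (n + 1)))
    (x₀ := v) (bound := fun x => (n:ℝ) * (x ^ (e + (n + 1 : ℕ) - 1) * Real.exp (-x)))
    (ball_mem_nhds v (half_pos hv))
    (by filter_upwards [eventually_gt_nhds hv] with w hw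
        exact (st7_contOn e n w hw.le).aestronglyMeasurable measurableSet_Ioi)
    (st7_int he hn hv)
    ((continuousOn_const.mul (st7_contOn e (n + 1) v hv.le)).aestronglyMeasurable
      measurableSet_Ioi)
    (by filter_upwards [self_mem_ae_restrict (measurableSet_Ioi : MeasurableSet (Set.Ioi (0:ℝ)))]
          with x hx w hw
        have hx' : (0:ℝ) < x := hx
        have hw' : 0 < w := lt_trans (half_pos hv) (st7_ball_pos hv hw)
        obtain ⟨ht0, ht1⟩ := st7_frac_bounds hx' hw'
        rw [Real.norm_eq_abs, abs_mul, abs_of_nonneg (by positivity :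
          (0:ℝ) ≤ x ^ (e - 1) * Real.exp (-x) * (x / (x * w + 1)) ^ (n + 1))]
        have habs : |(-(n:ℝ))| = (n:ℝ) := by simp
        rw [habs]
        exact mul_le_mul_of_nonneg_left (st7_pt_bound hx' hw' (n + 1)) (by positivity))
    (((st7_gamma hs).const_mul (n:ℝ)))
    (by filter_upwards [self_mem_ae_restrict (measurableSet_Ioi : MeasurableSet (Set.Ioi (0:ℝ)))]
          with x hx w hw
        have hx' : (0:ℝ) < x := hx
        have hw' : 0 < w := lt_trans (half_pos hv) (st7_ball_pos hv hw)
        have hne : x * w + 1 ≠ 0 := by nlinarith [mul_pos hx' hw']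
        have hlin : HasDerivAt (fun w : ℝ => x * w + 1) x w := by
          simpa using ((hasDerivAt_id w).const_mul x).add_const 1
        have hdiv := (hasDerivAt_const w x).div hlin hne
        have h := (hdiv.pow n).const_mul (x ^ (e - 1) * Real.exp (-x))
        refine h.congr_deriv ?_
        obtain ⟨k, rfl⟩ : ∃ k, n = k + 1 := ⟨n - 1, (Nat.succ_pred_eq_of_pos hn).symm⟩
        have ht2 : (0 * (x * w + 1) - x * x) / (x * w + 1) ^ 2 = -(x / (x * w + 1)) ^ 2 := by
          rw [div_pow]; ring
        rw [ht2, Nat.add_sub_cancel]; simp only [Pi.div_apply]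
        ring)
  have h2 := key.2
  rwa [MeasureTheory.integral_const_mul] at h2

lemma st7_iter {e : ℝ} (he : -1 < e) (n : ℕ) (hn : 1 ≤ n) :
    ∀ v : ℝ, 0 < v →
      deriv^[n] (fun w : ℝ => ∫ x in Set.Ioi (0:ℝ),
          x ^ (e - 1) * Real.log (x * w + 1) * Real.exp (-x)) v
        = (-1:ℝ) ^ (n + 1) * (Nat.factorial (n - 1) : ℝ) *
          ∫ x in Set.Ioi (0:ℝ), x ^ (e - 1) * Real.exp (-x) * (x / (x * v + 1)) ^ n := by
  induction n, hn using Nat.le_induction with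
  | base =>
    intro v hv
    simp only [Function.iterate_one]
    rw [(st7_deriv_log he hv).deriv]
    norm_num
  | succ n hn IH =>
    intro v hv
    rw [Function.iterate_succ_apply']
    have heq : deriv^[n] (fun w : ℝ => ∫ x in Set.Ioi (0:ℝ),
          x ^ (e - 1) * Real.log (x * w + 1) * Real.exp (-x))
        =ᶠ[nhds v] fun w => (-1:ℝ) ^ (n + 1) * (Nat.factorial (n - 1) : ℝ) *
          ∫ x in Set.Ioi (0:ℝ), x ^ (e - 1) * Real.exp (-x) * (x / (x * w + 1)) ^ n := by
      filter_upwards [isOpen_Ioi.mem_nhds (Set.mem_Ioi.mpr hv)] with w hw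
      exact IH w hw
    rw [heq.deriv_eq]
    have hd := ((st7_deriv_pow he hn hv).const_mul
      ((-1:ℝ) ^ (n + 1) * (Nat.factorial (n - 1) : ℝ))).deriv
    rw [hd]
    have hfac : ((n:ℝ)) * (Nat.factorial (n - 1) : ℝ) = (Nat.factorial n : ℝ) := by
      exact_mod_cast congrArg (Nat.cast : ℕ → ℝ) (Nat.mul_factorial_pred (Nat.one_le_iff_ne_zero.mp hn))
    simp only [Nat.add_sub_cancel, pow_succ]
    set I : ℝ := ∫ x in Set.Ioi (0:ℝ),
      x ^ (e - 1) * Real.exp (-x) * ((x / (x * v + 1)) ^ n * (x / (x * v + 1))) with hI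
    linear_combination ((-1:ℝ) ^ n * I) * hfac

theorem stmt7 (ε : ℝ) (hε : ε ∈ Set.Ioo (-1 : ℝ) (-1/2)) (u : ℝ) (hu : 0 < u)
    (m : ℕ) (hm : 2 ≤ m) :
    iteratedDeriv m
        (fun v : ℝ => ∫ x in Set.Ioi (0:ℝ), x ^ (ε - 1) * Real.log (x * v + 1) * Real.exp (-x))
        u * u ^ m =
      (-1 : ℝ) ^ (m + 1) * (Nat.factorial (m - 1) : ℝ) *
        ∫ x in Set.Ioi (0:ℝ), x ^ (ε - 1) * Real.exp (-x) * (x * u / (x * u + 1)) ^ m := by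
  have he : -1 < ε := hε.1
  have hm1 : 1 ≤ m := le_trans (by norm_num) hm
  rw [iteratedDeriv_eq_iterate, st7_iter he m hm1 u hu]
  have hInt : (∫ x in Set.Ioi (0:ℝ), x ^ (ε - 1) * Real.exp (-x) * (x * u / (x * u + 1)) ^ m)
      = u ^ m * ∫ x in Set.Ioi (0:ℝ), x ^ (ε - 1) * Real.exp (-x) * (x / (x * u + 1)) ^ m := by
    rw [← MeasureTheory.integral_const_mul]
    congr 1
    funext x
    rw [show x * u / (x * u + 1) = u * (x / (x * u + 1)) by ring, mul_pow]
    ring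
  rw [hInt]
  ring
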